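/- Let E be a finite directed graph with no sources and no sinks in which there is a path between any two vertices (E is irreducible and essential), and suppose E is not a single cycle. Then E contains a cycle, and some cycle of E has an exit. -/

import Mathlib

/-- `l` is a (nonempty) directed path in the graph with source map `s` and
range map `r`: the range of each edge is the source of the next. -/
def IsPath {V E : Type} (s r : E → V) (l : List E) : Prop :=
  l ≠ [] ∧ l.Chain' (fun e f => r e = s f)

/-- `l` is a path from vertex `v` to vertex `w`. -/
def IsPathFromTo {V E : Type} (s r : E → V) (v w : V) (l : List E) : Prop :=
  IsPath s r l ∧ (∃ e, l.head? = some e ∧ s e = v) ∧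
    (∃ e, l.getLast? = some e ∧ r e = w)

/-- `l` is a closed path: a path whose last edge ends where its first begins. -/
def IsClosedPath {V E : Type} (s r : E → V) (l : List E) : Prop :=
  IsPath s r l ∧ ∃ e f, l.head? = some e ∧ l.getLast? = some f ∧ r f = s e

/-- `l` is a cycle: a closed path whose edges have pairwise distinct sources. -/
def IsCycle {V E : Type} (s r : E → V) (l : List E) : Prop :=
  IsClosedPath s r l ∧ (l.map s).Nodup

/-- The path `l` has an exit: an edge `f ≠ e` emitted by the source of some
edge `e` of `l`. -/
def HasExit {V E : Type} (s r : E → V) (l : List E) : Prop :=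
  ∃ f e, e ∈ l ∧ s f = s e ∧ f ≠ e

lemma cycle_of_closed {V E : Type} (s r : E → V) :
    ∀ (n : ℕ) (l : List E), l.length ≤ n → IsClosedPath s r l →
      ∃ c : List E, IsCycle s r c := by
  intro n
  induction n with
  | zero =>
    rintro l hl ⟨⟨hne, _⟩, _⟩
    exact absurd (List.length_eq_zero_iff.mp (Nat.le_zero.mp hl)) hne
  | succ n ih =>
    rintro l hl hcp
    by_cases hnd : (l.map s).Nodup
    · exact ⟨l, hcp, hnd⟩
    · obtain ⟨⟨hne, hch⟩, -⟩ := hcp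
      have key : ∀ i j : ℕ, (hij : i < j) → (hj : j < l.length) →
          s (l[i]'(by omega)) = s (l[j]'hj) → ∃ c : List E, IsCycle s r c := by
        intro i j hij hj hss
        set seg := (l.drop i).take (j - i) with hseg
        have hlen : seg.length = j - i := by
          simp [hseg]; omega
        have hsegne : seg ≠ [] := by
          intro h; rw [h] at hlen; simp at hlen; omega
        have hinf : seg <:+: l :=
          ((l.drop i).take_prefix (j - i)).isInfix.trans (l.drop_suffix i).isInfix
        have hsegch : seg.Chain' (fun e f => r e = s f) := hch.infix hinf
        have hhead : seg.head? = some (l[i]'(by omega)) := by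
          rw [List.head?_eq_getElem?, List.getElem?_take_of_lt (by omega), List.getElem?_drop,
            Nat.add_zero, List.getElem?_eq_getElem]
        have hlast : seg.getLast? = some (l[j-1]'(by omega)) := by
          rw [List.getLast?_eq_getElem?, hlen, List.getElem?_take_of_lt (by omega),
            List.getElem?_drop]
          rw [show i + (j - i - 1) = j - 1 by omega, List.getElem?_eq_getElem]
        have hcl : r (l[j-1]'(by omega)) = s (l[j]'hj) := by
          have := List.isChain_iff_getElem.mp hch (j-1) (by omega)
          simpa [List.get_eq_getElem, show j - 1 + 1 = j by omega] using this
        refine ih seg (by omega) ⟨⟨hsegne, hsegch⟩, ?_⟩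
        exact ⟨_, _, hhead, hlast, by rw [hcl, ← hss]⟩
      rw [List.nodup_iff_injective_get, Function.not_injective_iff] at hnd
      obtain ⟨⟨i, hi⟩, ⟨j, hj⟩, hget, hnij⟩ := hnd
      simp only [List.length_map] at hi hj
      simp only [List.get_eq_getElem, List.getElem_map] at hget
      simp only [ne_eq, Fin.mk.injEq] at hnij
      rcases Nat.lt_or_ge i j with hij | hij
      · exact key i j hij hj (by simpa using hget)
      · exact key j i (by omega) hi (by simpa using hget.symm)

lemma ranges_in {V E : Type} (s r : E → V) (q : List E)
    (hc : IsClosedPath s r q) : ∀ e ∈ q, ∃ f ∈ q, r e = s f := by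
  obtain ⟨⟨hne, hch⟩, e0, f0, h0, hl0, hrf⟩ := hc
  intro e he
  obtain ⟨i, hi, rfl⟩ := List.mem_iff_getElem.mp he
  rcases Nat.lt_or_ge (i+1) q.length with h1 | h1
  · have hm : q[i+1] ∈ q := List.getElem_mem _
    refine ⟨q[i+1], hm, ?_⟩
    have := List.isChain_iff_getElem.mp hch i (by omega)
    simpa using this
  · have hi' : i = q.length - 1 := by omega
    have hg : q.getLast? = some q[i] := by
      rw [List.getLast?_eq_getElem?, ← hi', List.getElem?_eq_getElem]
    rw [hg] at hl0
    obtain rfl : f0 = q[i] := by injection hl0.symm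
    exact ⟨e0, List.mem_of_mem_head? h0, hrf⟩

lemma last_range_mem {V E : Type} (s r : E → V) (q : List E)
    (hc : IsClosedPath s r q)
    (hnoexit : ∀ f e, e ∈ q → s f = s e → f = e) :
    ∀ l : List E, l.Chain' (fun e f => r e = s f) →
      ∀ e0, l.head? = some e0 → s e0 ∈ q.map s →
      ∃ e1, l.getLast? = some e1 ∧ r e1 ∈ q.map s := by
  intro l
  induction l with
  | nil => simp
  | cons a tl ih =>
    intro hch e0 h0 hmem
    obtain rfl : e0 = a := by injection h0.symm
    obtain ⟨e', he', hse⟩ := List.mem_map.mp hmem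
    have hae : e0 = e' := hnoexit e0 e' he' hse.symm
    have hac : e0 ∈ q := hae ▸ he'
    have hra : r e0 ∈ q.map s := by
      obtain ⟨f, hf, hrf⟩ := ranges_in s r q hc e0 hac
      exact List.mem_map.mpr ⟨f, hf, hrf.symm⟩
    cases tl with
    | nil => exact ⟨e0, rfl, hra⟩
    | cons b tl' =>
      obtain ⟨hab, hch'⟩ := List.isChain_cons_cons.mp hch
      obtain ⟨e1, h1, h2⟩ := ih hch' b rfl (hab ▸ hra)
      exact ⟨e1, by rwa [List.getLast?_cons_cons], h2⟩

/-- A finite irreducible essential nontrivial graph (no sources, no sinks,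
paths between any two vertices, not a single cycle) contains a cycle, and
some cycle has an exit. -/
theorem exists_cycle_with_exit_of_irreducible_essential_nontrivial
    {V E : Type} [Fintype V] [Fintype E] [Nonempty V] (s r : E → V)
    (hnosource : ∀ v : V, ∃ e : E, r e = v)
    (hnosink : ∀ v : V, ∃ e : E, s e = v)
    (hirr : ∀ v w : V, ∃ l : List E, IsPathFromTo s r v w l)
    (hnontrivial : ¬ ∃ l : List E, IsCycle s r l ∧ (∀ e : E, e ∈ l) ∧
      (∀ v : V, v ∈ l.map s)) :
    (∃ l : List E, IsCycle s r l) ∧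
      ∃ l : List E, IsCycle s r l ∧ HasExit s r l := by
  classical
  obtain ⟨v⟩ := ‹Nonempty V›
  obtain ⟨l0, hp0, ⟨e0, he0, hse0⟩, ⟨f0, hf0, hrf0⟩⟩ := hirr v v
  have hcp0 : IsClosedPath s r l0 := ⟨hp0, e0, f0, he0, hf0, by rw [hrf0, hse0]⟩
  obtain ⟨q, hq⟩ := cycle_of_closed s r l0.length l0 le_rfl hcp0
  refine ⟨⟨q, hq⟩, ?_⟩
  by_contra hno
  push_neg at hno
  have hnoexit := hno q hq
  simp only [HasExit, not_exists, not_and, ne_eq, not_not] at hnoexit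
  obtain ⟨hqcp, hqnd⟩ := hq
  obtain ⟨⟨hqne, hqch⟩, eq0, fq0, hq0, hql0, hqrf⟩ := hqcp
  have hqcp' : IsClosedPath s r q := ⟨⟨hqne, hqch⟩, eq0, fq0, hq0, hql0, hqrf⟩
  have hv0 : s eq0 ∈ q.map s :=
    List.mem_map.mpr ⟨eq0, List.mem_of_mem_head? hq0, rfl⟩
  have hall : ∀ w : V, w ∈ q.map s := by
    intro w
    obtain ⟨l, ⟨hne, hch⟩, ⟨e, he, hse⟩, ⟨f, hf, hrf⟩⟩ := hirr (s eq0) w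
    obtain ⟨e1, h1, h2⟩ := last_range_mem s r q hqcp' hnoexit l hch e he
      (by rw [hse]; exact hv0)
    rw [hf] at h1
    obtain rfl : f = e1 := by injection h1
    rwa [hrf] at h2
  have halle : ∀ e : E, e ∈ q := by
    intro e
    obtain ⟨e', he', hse⟩ := List.mem_map.mp (hall (s e))
    rw [hnoexit e e' he' hse.symm]
    exact he'
  exact hnontrivial ⟨q, ⟨hqcp', hqnd⟩, halle, hall⟩
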